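/- The number of conic cosets in ℤ^n / A_V^T ℤ^d equals the number of connected components of the complement, in the d-dimensional torus ℝ^d/ℤ^d, of the union over i = 1, …, n of the images of the hyperplanes H_{v_i} = {x ∈ ℝ^d : ⟨v_i, x⟩ = 0} under the quotient map ℝ^d → ℝ^d/ℤ^d. -/

import Mathlib

open Matrix

/-- The real vector obtained from an integer vector by coordinatewise casting. -/
noncomputable def rVec {d : ℕ} (v : Fin d → ℤ) : Fin d → ℝ := fun j => (v j : ℝ)

/-- The cone `C(V)` generated by the vectors `V i` (viewed in `ℝ^d`). -/
def coneOf {d n : ℕ} (V : Fin n → Fin d → ℤ) : Set (Fin d → ℝ) :=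
  {x | ∃ a : Fin n → ℝ, (∀ i, 0 ≤ a i) ∧ x = ∑ i, a i • rVec (V i)}

/-- The standing hypotheses on the generators: pairwise distinct, nonzero, primitive,
a minimal generating system of the cone, and the cone is strongly convex. -/
def GoodGens {d n : ℕ} (V : Fin n → Fin d → ℤ) : Prop :=
  Function.Injective V ∧
  (∀ i, V i ≠ 0) ∧
  (∀ i, Finset.univ.gcd (V i) = 1) ∧
  (∀ i, ¬ ∃ a : Fin n → ℝ, (∀ j, 0 ≤ a j) ∧ a i = 0 ∧
      rVec (V i) = ∑ j, a j • rVec (V j)) ∧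
  (∀ x ∈ coneOf V, -x ∈ coneOf V → x = 0)

/-- `A_V^T` as a linear map `ℤ^d → ℤ^n`; the `i`-th coordinate of `A_V^T y` is `⟨v_i, y⟩`. -/
def ATZ {d n : ℕ} (V : Fin n → Fin d → ℤ) : (Fin d → ℤ) →ₗ[ℤ] (Fin n → ℤ) :=
  Matrix.mulVecLin (Matrix.of fun i j => V i j)

/-- A coset of `ℤ^n / A_V^T ℤ^d` is conic if it has a representative of the form
`⌈A_V^T y⌉` for some real `y`. -/
def IsConic {d n : ℕ} (V : Fin n → Fin d → ℤ)
    (α : (Fin n → ℤ) ⧸ LinearMap.range (ATZ V)) : Prop :=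
  ∃ a : Fin n → ℤ, Submodule.Quotient.mk a = α ∧
    ∃ y : Fin d → ℝ, ∀ i, a i = ⌈∑ j, (V i j : ℝ) * y j⌉

/-- The integer lattice `ℤ^d` inside `ℝ^d`, as an additive subgroup. -/
def intLattice (d : ℕ) : AddSubgroup (Fin d → ℝ) where
  carrier := {x | ∀ i, ∃ m : ℤ, x i = m}
  add_mem' := by
    rintro x y hx hy i
    obtain ⟨a, ha⟩ := hx i; obtain ⟨b, hb⟩ := hy i
    exact ⟨a + b, by simp [ha, hb]⟩
  zero_mem' := fun i => ⟨0, by simp⟩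
  neg_mem' := by
    rintro x hx i
    obtain ⟨a, ha⟩ := hx i
    exact ⟨-a, by simp [ha]⟩

/-- The complement, in the torus `ℝ^d/ℤ^d`, of the union of the images of the
hyperplanes `H_{v_i} = {x : ⟨v_i, x⟩ = 0}`. -/
def torusComplement {d n : ℕ} (V : Fin n → Fin d → ℤ) :
    Set ((Fin d → ℝ) ⧸ intLattice d) :=
  (⋃ i : Fin n,
    (QuotientAddGroup.mk '' {x : Fin d → ℝ | ∑ j, (V i j : ℝ) * x j = 0}))ᶜ

lemma exists_bezout {ι : Type*} [DecidableEq ι] (s : Finset ι) (f : ι → ℤ) :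
    ∃ c : ι → ℤ, ∑ j ∈ s, c j * f j = s.gcd f := by
  classical
  induction s using Finset.induction_on with
  | empty => exact ⟨0, by simp⟩
  | @insert a s ha ih =>
    obtain ⟨c, hc⟩ := ih
    refine ⟨Function.update (fun j => Int.gcdB (f a) (s.gcd f) * c j) a
        (Int.gcdA (f a) (s.gcd f)), ?_⟩
    rw [Finset.sum_insert ha, Finset.gcd_insert]
    have h1 : ∀ j ∈ s, Function.update
        (fun j => Int.gcdB (f a) (s.gcd f) * c j) a (Int.gcdA (f a) (s.gcd f)) j * f j
        = Int.gcdB (f a) (s.gcd f) * (c j * f j) := by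
      intro j hj
      rw [Function.update_of_ne (by rintro rfl; exact ha hj), mul_assoc]
    rw [Finset.sum_congr rfl h1, Function.update_self, ← Finset.mul_sum, hc]
    have := Int.gcd_eq_gcd_ab (f a) (s.gcd f)
    have hg : (GCDMonoid.gcd (f a) (s.gcd f) : ℤ) = Int.gcd (f a) (s.gcd f) :=
      (Int.coe_gcd _ _).symm
    rw [hg, this]
    ring


namespace ConicAux

variable {d n : ℕ} (V : Fin n → Fin d → ℤ)

/-- the linear functional y ↦ ⟨v_i, y⟩ -/
noncomputable def Lmap (i : Fin n) : (Fin d → ℝ) →ₗ[ℝ] ℝ :=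
  ∑ j, (V i j : ℝ) • LinearMap.proj j

lemma Lmap_apply (i : Fin n) (y : Fin d → ℝ) :
    Lmap V i y = ∑ j, (V i j : ℝ) * y j := by
  simp [Lmap, LinearMap.sum_apply]

lemma ATZ_apply (m : Fin d → ℤ) (i : Fin n) :
    ATZ V m i = ∑ j, V i j * m j := by
  simp [ATZ, Matrix.mulVecLin_apply, Matrix.mulVec, dotProduct]

lemma Lmap_intCast (i : Fin n) (m : Fin d → ℤ) :
    Lmap V i (fun j => (m j : ℝ)) = ((ATZ V m i : ℤ) : ℝ) := by
  rw [Lmap_apply, ATZ_apply]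
  push_cast
  rfl

/-- ceiling vector -/
noncomputable def ceilVec (y : Fin d → ℝ) : Fin n → ℤ := fun i => ⌈Lmap V i y⌉

lemma ceilVec_add_lattice (y : Fin d → ℝ) (m : Fin d → ℤ) :
    ceilVec V (y + fun j => (m j : ℝ)) = ceilVec V y + ATZ V m := by
  funext i
  simp only [ceilVec, map_add, Lmap_intCast, Pi.add_apply]
  exact Int.ceil_add_intCast _ _



lemma mem_intLattice {x : Fin d → ℝ} : x ∈ intLattice d ↔ ∀ i, ∃ m : ℤ, x i = m :=
  Iff.rfl

lemma exists_lattice_rep {x : Fin d → ℝ} (hx : x ∈ intLattice d) :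
    ∃ m : Fin d → ℤ, x = fun j => (m j : ℝ) := by
  choose m hm using (mem_intLattice.1 hx)
  exact ⟨m, funext hm⟩

/-- L1: the class of the ceiling vector only depends on the point in the torus. -/
lemma coset_eq_of_torus_eq {y y' : Fin d → ℝ}
    (h : (QuotientAddGroup.mk y : (Fin d → ℝ) ⧸ intLattice d) = QuotientAddGroup.mk y') :
    (Submodule.Quotient.mk (ceilVec V y) :
        (Fin n → ℤ) ⧸ LinearMap.range (ATZ V)) = Submodule.Quotient.mk (ceilVec V y') := by
  have hmem : -y + y' ∈ intLattice d := (QuotientAddGroup.eq).1 h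
  obtain ⟨m, hm⟩ := exists_lattice_rep hmem
  have hy' : y' = y + fun j => (m j : ℝ) := by
    funext j
    have := congrFun hm j
    simp only [Pi.add_apply, Pi.neg_apply] at this ⊢
    linarith
  rw [hy', ceilVec_add_lattice]
  rw [Submodule.Quotient.eq]
  exact ⟨-m, by simp⟩

/-- L2: a point of the torus complement has all pairings non-integral. -/
lemma not_int_of_mem_complement (hg : ∀ i, Finset.univ.gcd (V i) = 1)
    {y : Fin d → ℝ} (hy : (QuotientAddGroup.mk y : (Fin d → ℝ) ⧸ intLattice d)
      ∈ torusComplement V) (i : Fin n) (k : ℤ) : Lmap V i y ≠ k := by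
  intro hk
  obtain ⟨c, hc⟩ := exists_bezout Finset.univ (V i)
  rw [hg i] at hc
  apply hy
  refine Set.mem_iUnion.2 ⟨i, ?_⟩
  refine ⟨y - fun j => ((k * c j : ℤ) : ℝ), ?_, ?_⟩
  · show ∑ j, (V i j : ℝ) * (y - fun j => ((k * c j : ℤ) : ℝ)) j = 0
    have : ∑ j, (V i j : ℝ) * ((k * c j : ℤ) : ℝ) = (k : ℝ) := by
      have : (∑ j, V i j * (k * c j) : ℤ) = k := by
        calc ∑ j, V i j * (k * c j) = k * ∑ j, c j * V i j := by
              rw [Finset.mul_sum]; congr 1; funext j; ring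
          _ = k := by rw [hc, mul_one]
      calc ∑ j, (V i j : ℝ) * ((k * c j : ℤ) : ℝ)
          = ((∑ j, V i j * (k * c j) : ℤ) : ℝ) := by push_cast; rfl
        _ = (k : ℝ) := by rw [this]
    simp only [Pi.sub_apply, mul_sub, Finset.sum_sub_distrib]
    rw [this]
    have hLk : ∑ j, (V i j : ℝ) * y j = (k : ℝ) := by rw [← Lmap_apply]; exact hk
    rw [hLk, sub_self]
  · rw [QuotientAddGroup.eq]
    intro j
    exact ⟨k * c j, by simp⟩

/-- the open box of points with prescribed ceiling vector, off the walls -/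
noncomputable def Box (a : Fin n → ℤ) : Set (Fin d → ℝ) :=
  ⋂ i, (Lmap V i) ⁻¹' Set.Ioo ((a i : ℝ) - 1) (a i)

lemma isOpen_box (a : Fin n → ℤ) : IsOpen (Box V a) :=
  isOpen_iInter_of_finite fun i =>
    (isOpen_Ioo).preimage (Lmap V i).continuous_of_finiteDimensional

lemma convex_box (a : Fin n → ℤ) : Convex ℝ (Box V a) :=
  convex_iInter fun i => (convex_Ioo _ _).linear_preimage (Lmap V i)

lemma mem_box_iff {a : Fin n → ℤ} {y : Fin d → ℝ} :
    y ∈ Box V a ↔ ∀ i, (a i : ℝ) - 1 < Lmap V i y ∧ Lmap V i y < a i := by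
  simp [Box, Set.mem_iInter]

lemma box_subset_complement {a : Fin n → ℤ} {y : Fin d → ℝ} (hy : y ∈ Box V a) :
    (QuotientAddGroup.mk y : (Fin d → ℝ) ⧸ intLattice d) ∈ torusComplement V := by
  intro hmem
  obtain ⟨i, hi⟩ := Set.mem_iUnion.1 hmem
  obtain ⟨x, hx0, hxy⟩ := hi
  have hlat : -x + y ∈ intLattice d := (QuotientAddGroup.eq).1 hxy
  obtain ⟨m, hm⟩ := exists_lattice_rep hlat
  have hyx : y = x + fun j => (m j : ℝ) := by
    funext j
    have := congrFun hm j
    simp only [Pi.add_apply, Pi.neg_apply] at this ⊢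
    linarith
  have hLy : Lmap V i y = ((ATZ V m i : ℤ) : ℝ) := by
    rw [hyx, map_add, Lmap_intCast]
    have hx0' : Lmap V i x = 0 := by rw [Lmap_apply]; exact hx0
    rw [hx0', zero_add]
  obtain ⟨h1, h2⟩ := (mem_box_iff V).1 hy i
  rw [hLy] at h1 h2
  have : a i - 1 < ATZ V m i := by exact_mod_cast h1
  have : ATZ V m i < a i := by exact_mod_cast h2
  omega

lemma ceilVec_of_mem_box {a : Fin n → ℤ} {y : Fin d → ℝ} (hy : y ∈ Box V a) :
    ceilVec V y = a := by
  funext i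
  obtain ⟨h1, h2⟩ := (mem_box_iff V).1 hy i
  exact Int.ceil_eq_iff.2 ⟨by push_cast; linarith, le_of_lt h2⟩

lemma mem_box_of_not_int {y : Fin d → ℝ} (h : ∀ i (k : ℤ), Lmap V i y ≠ k) :
    y ∈ Box V (ceilVec V y) := by
  rw [mem_box_iff]
  intro i
  constructor
  · show ((⌈Lmap V i y⌉ : ℤ) : ℝ) - 1 < Lmap V i y
    have := Int.ceil_lt_add_one (Lmap V i y)
    linarith
  · show Lmap V i y < ((⌈Lmap V i y⌉ : ℤ) : ℝ)
    rcases lt_or_eq_of_le (Int.le_ceil (Lmap V i y)) with h' | h'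
    · exact h'
    · exact absurd h' (h i _)



/-- The map `w ↦ ∑ w i • v_i` as a linear map. -/
noncomputable def Tmap : (Fin n → ℝ) →ₗ[ℝ] (Fin d → ℝ) :=
  ∑ i, (LinearMap.proj i : (Fin n → ℝ) →ₗ[ℝ] ℝ).smulRight (rVec (V i))

lemma Tmap_apply (w : Fin n → ℝ) : Tmap V w = ∑ i, w i • rVec (V i) := by
  simp [Tmap, LinearMap.sum_apply]

lemma rVec_eq_zero_iff {v : Fin d → ℤ} : rVec v = 0 ↔ v = 0 := by
  constructor
  · intro h; funext j
    have := congrFun h j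
    simpa [rVec] using this
  · rintro rfl; funext j; simp [rVec]

/-- Strong convexity gives a strictly positive linear functional. -/
lemma exists_pos_functional (hV : GoodGens V) : ∃ z : Fin d → ℝ, ∀ i, 0 < Lmap V i z := by
  classical
  obtain ⟨-, hnz, -, -, hconv⟩ := hV
  set K : Set (Fin d → ℝ) := Tmap V '' stdSimplex ℝ (Fin n) with hK
  have hKconv : Convex ℝ K := (convex_stdSimplex ℝ (Fin n)).linear_image (Tmap V)
  have hKcl : IsClosed K :=
    ((isCompact_stdSimplex ℝ (Fin n)).image (Tmap V).continuous_of_finiteDimensional).isClosed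
  have h0K : (0 : Fin d → ℝ) ∉ K := by
    rintro ⟨w, ⟨hw0, hw1⟩, hw⟩
    rw [Tmap_apply] at hw
    -- find an index with positive weight
    have : ∃ i0, w i0 ≠ 0 := by
      by_contra h
      push_neg at h
      rw [Finset.sum_congr rfl (fun i _ => h i)] at hw1
      simp at hw1
    obtain ⟨i0, hi0⟩ := this
    have hi0pos : 0 < w i0 := lt_of_le_of_ne (hw0 i0) (Ne.symm hi0)
    have hmem : rVec (V i0) ∈ coneOf V := by
      refine ⟨fun k => if k = i0 then 1 else 0, fun k => by positivity, ?_⟩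
      simp [ite_smul]
    have hmemneg : -rVec (V i0) ∈ coneOf V := by
      refine ⟨fun k => if k = i0 then 0 else w k / w i0, fun k => ?_, ?_⟩
      · dsimp only; split
        · exact le_rfl
        · exact div_nonneg (hw0 k) hi0pos.le
      · apply smul_right_injective (Fin d → ℝ) (ne_of_gt hi0pos)
        show w i0 • -rVec (V i0) = w i0 • ∑ k, (if k = i0 then (0:ℝ) else w k / w i0) • rVec (V k)
        rw [Finset.smul_sum]
        have hterm : ∀ k ∈ Finset.univ, w i0 • (if k = i0 then (0:ℝ) else w k / w i0) • rVec (V k)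
            = w k • rVec (V k) - (if k = i0 then w k • rVec (V k) else 0) := by
          intro k _
          by_cases hk : k = i0
          · simp [hk]
          · rw [if_neg hk, if_neg hk, smul_smul, sub_zero]
            congr 1
            field_simp
        rw [Finset.sum_congr rfl hterm, Finset.sum_sub_distrib, hw,
          Finset.sum_ite_eq' Finset.univ i0 (fun k => w k • rVec (V k))]
        simp [smul_neg]
    have := hconv _ hmem hmemneg
    exact (hnz i0) (rVec_eq_zero_iff.1 this)
  obtain ⟨f, u, hu0, hub⟩ := geometric_hahn_banach_point_closed hKconv hKcl h0K
  rw [map_zero] at hu0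
  refine ⟨fun j => f (Pi.single j 1), fun i => ?_⟩
  have hVi : rVec (V i) ∈ K := by
    refine ⟨fun k => if k = i then 1 else 0, ?_, ?_⟩
    · constructor
      · intro k; positivity
      · simp
    · rw [Tmap_apply]; simp [ite_smul]
  have hfi : u < f (rVec (V i)) := hub _ hVi
  have hrepr : f (rVec (V i)) = Lmap V i (fun j => f (Pi.single j 1)) := by
    rw [Lmap_apply]
    have : rVec (V i) = ∑ j, (V i j : ℝ) • (Pi.single j 1 : Fin d → ℝ) := by
      funext k
      simp only [Finset.sum_apply, Pi.smul_apply, Pi.single_apply, smul_eq_mul,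
        mul_ite, mul_one, mul_zero]
      rw [Finset.sum_ite_eq Finset.univ k (fun x => ((V i x : ℝ)))]
      simp [rVec]
    rw [this, map_sum]
    refine Finset.sum_congr rfl fun j _ => ?_
    rw [_root_.map_smul]
    rfl
  rw [← hrepr]
  exact lt_trans hu0 hfi

/-- Two points of the complement coming from the same box lie in the same connected component. -/
lemma same_component {a : Fin n → ℤ} {y y' : Fin d → ℝ}
    (hy : y ∈ Box V a) (hy' : y' ∈ Box V a)
    (x x' : torusComplement V)
    (hx : (x : (Fin d → ℝ) ⧸ intLattice d) = QuotientAddGroup.mk y)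
    (hx' : (x' : (Fin d → ℝ) ⧸ intLattice d) = QuotientAddGroup.mk y') :
    ConnectedComponents.mk x = ConnectedComponents.mk x' := by
  set s : Set ((Fin d → ℝ) ⧸ intLattice d) := QuotientAddGroup.mk '' Box V a with hsdef
  have hsub : s ⊆ torusComplement V := by
    rintro _ ⟨w, hw, rfl⟩
    exact box_subset_complement V hw
  set t : Set (torusComplement V) := Subtype.val ⁻¹' s with htdef
  have himg : Subtype.val '' t = s := by
    rw [htdef, Set.image_preimage_eq_inter_range, Subtype.range_val]
    exact Set.inter_eq_self_of_subset_left hsub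
  have hs : IsPreconnected s :=
    ((convex_box V a).isPreconnected).image _
      (QuotientAddGroup.continuous_mk).continuousOn
  have ht : IsPreconnected t := by
    have := (Topology.IsInducing.subtypeVal
      (t := torusComplement V)).isPreconnected_image (s := t)
    rw [himg] at this
    exact this.1 hs
  have hxt : x ∈ t := by
    show (x : (Fin d → ℝ) ⧸ intLattice d) ∈ s
    rw [hx]; exact ⟨y, hy, rfl⟩
  have hxt' : x' ∈ t := by
    show (x' : (Fin d → ℝ) ⧸ intLattice d) ∈ s
    rw [hx']; exact ⟨y', hy', rfl⟩
  rw [ConnectedComponents.coe_eq_coe]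
  have h1 : t ⊆ connectedComponent x := ht.subset_connectedComponent hxt
  exact connectedComponent_eq (h1 hxt')

/-- The candidate coset attached to a torus point. -/
noncomputable def torusCoset (q : (Fin d → ℝ) ⧸ intLattice d) :
    (Fin n → ℤ) ⧸ LinearMap.range (ATZ V) :=
  Submodule.Quotient.mk (ceilVec V (Quotient.out q))

lemma torusCoset_mk (y : Fin d → ℝ) :
    torusCoset V (QuotientAddGroup.mk y) = Submodule.Quotient.mk (ceilVec V y) :=
  coset_eq_of_torus_eq V (QuotientAddGroup.out_eq' _)

lemma torusCoset_conic (q : (Fin d → ℝ) ⧸ intLattice d) : IsConic V (torusCoset V q) := by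
  refine ⟨ceilVec V (Quotient.out q), rfl, Quotient.out q, fun i => ?_⟩
  show ⌈Lmap V i (Quotient.out q)⌉ = _
  rw [Lmap_apply]

lemma isLocallyConstant_torusCoset (hg1 : ∀ i, Finset.univ.gcd (V i) = 1) :
    IsLocallyConstant
      (fun x : torusComplement V => torusCoset V (x : (Fin d → ℝ) ⧸ intLattice d)) := by
  rw [IsLocallyConstant.iff_exists_open]
  intro x
  set y := Quotient.out (x : (Fin d → ℝ) ⧸ intLattice d) with hydef
  have hmk : (QuotientAddGroup.mk y : (Fin d → ℝ) ⧸ intLattice d) = x :=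
    QuotientAddGroup.out_eq' _
  have hnint : ∀ i (k : ℤ), Lmap V i y ≠ k := fun i k =>
    not_int_of_mem_complement V hg1 (by rw [hmk]; exact x.2) i k
  have hbox : y ∈ Box V (ceilVec V y) := mem_box_of_not_int V hnint
  refine ⟨Subtype.val ⁻¹' (QuotientAddGroup.mk '' Box V (ceilVec V y)), ?_, ?_, ?_⟩
  · exact (QuotientAddGroup.isOpenMap_coe _ (isOpen_box V _)).preimage
      continuous_subtype_val
  · exact ⟨y, hbox, hmk⟩
  · rintro x' ⟨w, hw, hwx⟩
    show torusCoset V (x' : (Fin d → ℝ) ⧸ intLattice d)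
      = torusCoset V (x : (Fin d → ℝ) ⧸ intLattice d)
    rw [← hwx, ← hmk, torusCoset_mk, torusCoset_mk, ceilVec_of_mem_box V hw,
      ceilVec_of_mem_box V hbox]

lemma component_eq_of_coset_eq (hg1 : ∀ i, Finset.univ.gcd (V i) = 1)
    (x x' : torusComplement V)
    (h : torusCoset V (x : (Fin d → ℝ) ⧸ intLattice d)
        = torusCoset V (x' : (Fin d → ℝ) ⧸ intLattice d)) :
    ConnectedComponents.mk x = ConnectedComponents.mk x' := by
  set y := Quotient.out (x : (Fin d → ℝ) ⧸ intLattice d) with hydef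
  set y' := Quotient.out (x' : (Fin d → ℝ) ⧸ intLattice d) with hydef'
  have hmk : (QuotientAddGroup.mk y : (Fin d → ℝ) ⧸ intLattice d) = x :=
    QuotientAddGroup.out_eq' _
  have hmk' : (QuotientAddGroup.mk y' : (Fin d → ℝ) ⧸ intLattice d) = x' :=
    QuotientAddGroup.out_eq' _
  rw [← hmk, ← hmk', torusCoset_mk, torusCoset_mk, Submodule.Quotient.eq] at h
  obtain ⟨m, hm⟩ := h
  set y'' : Fin d → ℝ := y' + fun j => (m j : ℝ) with hydef''
  have hmk'' : (QuotientAddGroup.mk y'' : (Fin d → ℝ) ⧸ intLattice d) = x' := by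
    rw [← hmk']
    rw [QuotientAddGroup.eq]
    intro j
    exact ⟨-(m j), by simp [hydef'']⟩
  have hceil : ceilVec V y'' = ceilVec V y := by
    rw [hydef'', ceilVec_add_lattice, hm]
    abel
  have hnint : ∀ i (k : ℤ), Lmap V i y ≠ k := fun i k =>
    not_int_of_mem_complement V hg1 (by rw [hmk]; exact x.2) i k
  have hnint'' : ∀ i (k : ℤ), Lmap V i y'' ≠ k := fun i k =>
    not_int_of_mem_complement V hg1 (by rw [hmk'']; exact x'.2) i k
  have hbox : y ∈ Box V (ceilVec V y) := mem_box_of_not_int V hnint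
  have hbox'' : y'' ∈ Box V (ceilVec V y) := by
    rw [← hceil]
    exact mem_box_of_not_int V hnint''
  exact same_component V hbox hbox'' x x' hmk.symm hmk''.symm

end ConicAux

open ConicAux

theorem number_of_conic_classes_eq_components_of_toric_arrangement_complement
    (d n : ℕ) (hd : 1 ≤ d) (hn : 1 ≤ n)
    (V : Fin n → Fin d → ℤ) (hV : GoodGens V) :
    {α : (Fin n → ℤ) ⧸ LinearMap.range (ATZ V) | IsConic V α}.ncard =
      Nat.card (ConnectedComponents (torusComplement V)) := by
  classical
  have hg1 : ∀ i, Finset.univ.gcd (V i) = 1 := hV.2.2.1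
  haveI : Nonempty (Fin n) := Fin.pos_iff_nonempty.mp hn
  set f : torusComplement V → {α : (Fin n → ℤ) ⧸ LinearMap.range (ATZ V) // IsConic V α} :=
    fun x => ⟨torusCoset V (x : (Fin d → ℝ) ⧸ intLattice d), torusCoset_conic V _⟩ with hfdef
  have hloc := isLocallyConstant_torusCoset V hg1
  have hwd : ∀ (x x' : torusComplement V),
      connectedComponent x = connectedComponent x' → f x = f x' := by
    intro x x' hcc
    apply Subtype.ext
    exact hloc.apply_eq_of_isPreconnected isPreconnected_connectedComponent
      mem_connectedComponent (by rw [hcc]; exact mem_connectedComponent)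
  set Φ : ConnectedComponents (torusComplement V) →
      {α : (Fin n → ℤ) ⧸ LinearMap.range (ATZ V) // IsConic V α} :=
    Quotient.lift f (fun x x' h => hwd x x' h) with hΦdef
  have hinj : Function.Injective Φ := by
    intro c c'
    obtain ⟨x, rfl⟩ := ConnectedComponents.surjective_coe c
    obtain ⟨x', rfl⟩ := ConnectedComponents.surjective_coe c'
    intro h
    have hco : torusCoset V (x : (Fin d → ℝ) ⧸ intLattice d)
        = torusCoset V (x' : (Fin d → ℝ) ⧸ intLattice d) := congrArg Subtype.val h
    exact component_eq_of_coset_eq V hg1 x x' hco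
  have hsurj : Function.Surjective Φ := by
    rintro ⟨α, a, ha, w, hw⟩
    obtain ⟨z, hz⟩ := exists_pos_functional V hV
    have hw' : ∀ i, a i = ⌈Lmap V i w⌉ := by
      intro i; rw [Lmap_apply]; exact hw i
    have hnum : ∀ i, (0:ℝ) < Lmap V i w - ((a i : ℝ) - 1) := by
      intro i
      have h1 : ((a i : ℝ)) < Lmap V i w + 1 := by
        rw [hw' i]; exact_mod_cast Int.ceil_lt_add_one _
      linarith
    set δ : Fin n → ℝ := fun i => (Lmap V i w - ((a i : ℝ) - 1)) / (2 * Lmap V i z) with hδdef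
    have hδpos : ∀ i, 0 < δ i := fun i => div_pos (hnum i) (by linarith [hz i])
    set ε := Finset.univ.inf' Finset.univ_nonempty δ with hεdef
    have hεpos : 0 < ε := by
      rw [hεdef, Finset.lt_inf'_iff]
      exact fun i _ => hδpos i
    set y' := w - ε • z with hy'def
    have hL : ∀ i, Lmap V i y' = Lmap V i w - ε * Lmap V i z := by
      intro i; rw [hy'def, map_sub, LinearMap.map_smul, smul_eq_mul]
    have hbox : y' ∈ Box V a := by
      rw [mem_box_iff]
      intro i
      have hεle : ε ≤ δ i := Finset.inf'_le δ (Finset.mem_univ i)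
      have hzne : Lmap V i z ≠ 0 := (hz i).ne'
      have hδz : δ i * Lmap V i z = (Lmap V i w - ((a i : ℝ) - 1)) / 2 := by
        simp only [hδdef]
        field_simp
      constructor
      · rw [hL]
        have hmul : ε * Lmap V i z ≤ δ i * Lmap V i z :=
          mul_le_mul_of_nonneg_right hεle (hz i).le
        rw [hδz] at hmul
        linarith [hnum i]
      · rw [hL]
        have h2 : Lmap V i w ≤ (a i : ℝ) := by
          rw [hw' i]; exact_mod_cast Int.le_ceil _
        nlinarith [mul_pos hεpos (hz i)]
    refine ⟨ConnectedComponents.mk ⟨QuotientAddGroup.mk y', box_subset_complement V hbox⟩, ?_⟩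
    apply Subtype.ext
    show torusCoset V (QuotientAddGroup.mk y') = α
    rw [torusCoset_mk, ceilVec_of_mem_box V hbox, ha]
  rw [← Nat.card_coe_set_eq]
  exact (Nat.card_congr (Equiv.ofBijective Φ ⟨hinj, hsurj⟩)).symm
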